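/- Let 0 < α < 1, y > 0, and let Λ₁ > Λ₂ > … > Λ_{2n} > 0 be distinct positive reals with Λ_{n+i} = Λ_i⁻¹ for i = 1,…,n, each Λ_a ≠ α and Λ_aΛ_b ≠ α² for all a,b. Define W_a = α(Λ_a − y²)·∏_{b≠a} (α⁻¹Λ_aΛ_b − α)/(Λ_a − Λ_b). Then for every a with Λ_a² ≠ α², ∑_{b=1}^{2n} W_b/(Λ_aΛ_b − α²) = (y²Λ_a − α²)/(Λ_a² − α²). -/

import Mathlib

open Finset Polynomial

private lemma coeff_basis_top {ι : Type*} [DecidableEq ι] (s : Finset ι) (v : ι → ℝ)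
    (i : ι) (hi : i ∈ s) :
    (Lagrange.basis s v i).coeff (s.card - 1) = (∏ j ∈ s.erase i, (v i - v j))⁻¹ := by
  have hM : (∏ j ∈ s.erase i, (X - C (v j)) : ℝ[X]).Monic :=
    monic_prod_of_monic _ _ fun j _ => monic_X_sub_C _
  have hdeg : (∏ j ∈ s.erase i, (X - C (v j)) : ℝ[X]).natDegree = s.card - 1 := by
    rw [natDegree_prod_of_monic _ _ fun j _ => monic_X_sub_C _]
    simp [card_erase_of_mem hi, natDegree_X_sub_C]
  have hb : Lagrange.basis s v i
      = C (∏ j ∈ s.erase i, (v i - v j)⁻¹) * ∏ j ∈ s.erase i, (X - C (v j)) := by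
    rw [Lagrange.basis]
    simp_rw [Lagrange.basisDivisor]
    rw [prod_mul_distrib, map_prod]
  rw [hb, coeff_C_mul, ← hdeg, hM.coeff_natDegree, mul_one, prod_inv_distrib]

private lemma master {ι : Type*} [Fintype ι] [DecidableEq ι] (v : ι → ℝ)
    (hv : Function.Injective v) (F : ℝ[X])
    (hF : F.degree < ((Fintype.card ι - 1 : ℕ) : WithBot ℕ)) :
    ∑ i, F.eval (v i) * (∏ j ∈ univ.erase i, (v i - v j))⁻¹ = 0 := by
  have hcard : (univ : Finset ι).card = Fintype.card ι := card_univ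
  have hlt : F.degree < ((univ : Finset ι).card : WithBot ℕ) := by
    rw [hcard]
    exact hF.trans_le (by exact_mod_cast Nat.sub_le _ 1)
  have key := Lagrange.eq_interpolate (v := v) hv.injOn hlt
  have h0 : F.coeff (Fintype.card ι - 1) = 0 := coeff_eq_zero_of_degree_lt hF
  rw [key, Lagrange.interpolate_apply, finset_sum_coeff] at h0
  rw [← h0]
  refine sum_congr rfl fun i hi => ?_
  rw [coeff_C_mul, ← hcard, coeff_basis_top _ _ _ hi]

/-- The explicit formula for `|w̃_a|²` solves the linear system arising from
the momentum map constraint. -/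
theorem wtilde_solves_constraint (n : ℕ) (α y : ℝ)
    (hα : 0 < α) (hα1 : α < 1) (hy : 0 < y)
    (Λ : Fin (2 * n) → ℝ)
    (hpos : ∀ a, 0 < Λ a)
    (hord : ∀ a b : Fin (2 * n), a < b → Λ b < Λ a)
    (hinv : ∀ i : Fin (2 * n), ∀ h : (i : ℕ) + n < 2 * n,
      Λ ⟨(i : ℕ) + n, h⟩ = (Λ i)⁻¹)
    (hΛα : ∀ a, Λ a ≠ α)
    (hΛΛ : ∀ a b, Λ a * Λ b ≠ α ^ 2)
    (W : Fin (2 * n) → ℝ)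
    (hW : ∀ a, W a = α * (Λ a - y ^ 2) *
      ∏ b ∈ univ.erase a, (α⁻¹ * Λ a * Λ b - α) / (Λ a - Λ b))
    (a : Fin (2 * n)) (ha : (Λ a) ^ 2 ≠ α ^ 2) :
    ∑ b, W b / (Λ a * Λ b - α ^ 2)
      = (y ^ 2 * Λ a - α ^ 2) / ((Λ a) ^ 2 - α ^ 2) := by
  classical
  have hn : 0 < 2 * n := a.pos
  have hα0 : α ≠ 0 := ne_of_gt hα
  have hΛinj : Function.Injective Λ := by
    intro b c h
    by_contra hbc
    rcases lt_or_gt_of_ne hbc with h1 | h1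
    · exact (hord b c h1).ne h.symm
    · exact (hord c b h1).ne h
  have hprod_ne : ∀ b : Fin (2 * n), ∏ c ∈ univ.erase b, (Λ b - Λ c) ≠ 0 := by
    intro b
    refine prod_ne_zero_iff.mpr fun c hc => sub_ne_zero.mpr ?_
    exact fun he => (mem_erase.mp hc).1 (hΛinj he.symm)
  -- the polynomial F
  set F : ℝ[X] := (X - C (y ^ 2)) * ∏ c ∈ univ.erase a, (C (Λ c) * X - C (α ^ 2)) with hFdef
  have hFeval : ∀ x : ℝ, F.eval x = (x - y ^ 2) * ∏ c ∈ univ.erase a, (Λ c * x - α ^ 2) := by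
    intro x; simp [hFdef, eval_prod]
  -- the node map
  set v : Fin (2 * n) ⊕ Bool → ℝ := Sum.elim Λ (fun b => if b then α else -α) with hvdef
  have hvinj : Function.Injective v := by
    have hne1 : ∀ i : Fin (2 * n), Λ i ≠ -α := fun i h => by nlinarith [hpos i]
    rintro (i | i) (j | j) hij
    · exact congrArg _ (hΛinj (by simpa [hvdef] using hij))
    · exfalso
      simp only [hvdef, Sum.elim_inl, Sum.elim_inr] at hij
      cases j
      · simp only [Bool.false_eq_true, if_false] at hij; exact hne1 i hij
      · simp only [if_true] at hij; exact hΛα i hij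
    · exfalso
      simp only [hvdef, Sum.elim_inl, Sum.elim_inr] at hij
      cases i
      · simp only [Bool.false_eq_true, if_false] at hij; exact hne1 j hij.symm
      · simp only [if_true] at hij; exact hΛα j hij.symm
    · cases i <;> cases j <;>
        simp only [hvdef, Sum.elim_inr, if_true, Bool.false_eq_true, if_false] at hij <;>
        first
          | rfl
          | (exfalso; nlinarith)
  have hdegF : F.degree < ((Fintype.card (Fin (2 * n) ⊕ Bool) - 1 : ℕ) : WithBot ℕ) := by
    have hcard : Fintype.card (Fin (2 * n) ⊕ Bool) = 2 * n + 2 := by simp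
    rw [hcard]
    have hnd : F.natDegree ≤ 2 * n := by
      refine natDegree_mul_le.trans ?_
      have h1 : (X - C (y ^ 2) : ℝ[X]).natDegree ≤ 1 := (natDegree_X_sub_C _).le
      have h2 : (∏ c ∈ univ.erase a, (C (Λ c) * X - C (α ^ 2)) : ℝ[X]).natDegree
          ≤ 2 * n - 1 := by
        refine le_trans (Polynomial.natDegree_prod_le _ _) ?_
        have hb : ∀ c ∈ univ.erase a, (C (Λ c) * X - C (α ^ 2) : ℝ[X]).natDegree ≤ 1 := by
          intro c _
          refine (natDegree_sub_le _ _).trans ?_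
          have hx : (C (Λ c) * X : ℝ[X]).natDegree ≤ 1 :=
            natDegree_mul_le.trans (by simp)
          simp only [natDegree_C]
          omega
        calc ∑ c ∈ univ.erase a, (C (Λ c) * X - C (α ^ 2) : ℝ[X]).natDegree
            ≤ ∑ _c ∈ univ.erase a, 1 := Finset.sum_le_sum hb
          _ = 2 * n - 1 := by
              rw [Finset.sum_const, smul_eq_mul, mul_one, card_erase_of_mem (mem_univ a),
                card_univ, Fintype.card_fin]
      omega
    calc F.degree ≤ (F.natDegree : WithBot ℕ) := degree_le_natDegree
      _ < ((2 * n + 2 - 1 : ℕ) : WithBot ℕ) := by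
          exact_mod_cast Nat.lt_of_le_of_lt hnd (by omega)
  have hmaster := master v hvinj F hdegF
  rw [Fintype.sum_sum_type] at hmaster
  -- erase identities
  have herase_l : ∀ b : Fin (2 * n),
      (univ : Finset (Fin (2 * n) ⊕ Bool)).erase (Sum.inl b)
        = (univ.erase b).disjSum univ := by
    intro b; ext x; cases x <;> simp
  have herase_r : ∀ s : Bool,
      (univ : Finset (Fin (2 * n) ⊕ Bool)).erase (Sum.inr s)
        = univ.disjSum (univ.erase s) := by
    intro s; ext x; cases x <;> simp
  set β : ℝ := α ^ (2 * n - 2) with hβdef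
  have hβα : β * α = α ^ (2 * n - 1) := by
    rw [hβdef, ← pow_succ]
    congr 1
    omega
  have hcard_erase : ∀ b : Fin (2 * n), (univ.erase b).card = 2 * n - 1 := fun b => by
    rw [card_erase_of_mem (mem_univ b), card_univ, Fintype.card_fin]
  -- Step 1: the Fin part of the master sum
  have h1 : ∀ b : Fin (2 * n),
      F.eval (v (Sum.inl b)) * (∏ j ∈ univ.erase (Sum.inl b), (v (Sum.inl b) - v j))⁻¹
        = β * (W b / (Λ a * Λ b - α ^ 2)) := by
    intro b
    rw [herase_l b, prod_disjSum]
    have hBool : (∏ x : Bool, (v (Sum.inl b) - v (Sum.inr x)))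
        = (Λ b - α) * (Λ b + α) := by
      rw [Fintype.prod_bool]
      simp only [hvdef, Sum.elim_inl, Sum.elim_inr, if_true, Bool.false_eq_true, if_false]
      ring
    rw [hBool]
    simp only [hvdef, Sum.elim_inl]
    rw [hFeval, hW b]
    -- rewrite the product of quotients
    have hq : ∏ c ∈ univ.erase b, ((α⁻¹ * Λ b * Λ c - α) / (Λ b - Λ c))
        = ((α ^ (2 * n - 1))⁻¹ * ∏ c ∈ univ.erase b, (Λ b * Λ c - α ^ 2))
          / ∏ c ∈ univ.erase b, (Λ b - Λ c) := by
      rw [prod_div_distrib]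
      congr 1
      have : ∀ c ∈ univ.erase b, α⁻¹ * Λ b * Λ c - α = α⁻¹ * (Λ b * Λ c - α ^ 2) := by
        intro c _
        field_simp
      rw [prod_congr rfl this, prod_mul_distrib, prod_const, hcard_erase b,
        inv_pow]
    rw [hq]
    have hkey : (Λ b * Λ b - α ^ 2) * ∏ c ∈ univ.erase b, (Λ b * Λ c - α ^ 2)
        = (Λ b * Λ a - α ^ 2) * ∏ c ∈ univ.erase a, (Λ b * Λ c - α ^ 2) := by
      rw [Finset.mul_prod_erase univ (fun c => Λ b * Λ c - α ^ 2) (mem_univ b),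
        Finset.mul_prod_erase univ (fun c => Λ b * Λ c - α ^ 2) (mem_univ a)]
    have hQ1 : ∏ c ∈ univ.erase a, (Λ c * Λ b - α ^ 2)
        = ∏ c ∈ univ.erase a, (Λ b * Λ c - α ^ 2) :=
      prod_congr rfl fun c _ => by ring_nf
    rw [hQ1]
    -- now a pure field computation
    have hab : Λ a * Λ b - α ^ 2 ≠ 0 := sub_ne_zero.mpr (hΛΛ a b)
    have hbα : Λ b - α ≠ 0 := sub_ne_zero.mpr (hΛα b)
    have hbα' : Λ b + α ≠ 0 := by have := hpos b; intro h; nlinarith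
    have hP2 : ∏ c ∈ univ.erase b, (Λ b - Λ c) ≠ 0 := hprod_ne b
    have hpow : α ^ (2 * n - 1) ≠ 0 := pow_ne_zero _ hα0
    have hab' : Λ b * Λ a - α ^ 2 ≠ 0 := by rw [mul_comm]; exact hab
    field_simp
    rw [← hβα]
    linear_combination
      (-(β * α) * (Λ b - y ^ 2)) * hkey
  -- Step 2: the Bool part
  set R : ℝ := ∏ c ∈ univ.erase a, (α - Λ c) with hRdef
  set Q : ℝ := ∏ c ∈ univ.erase a, (-α - Λ c) with hQdef
  have hR0 : R ≠ 0 := prod_ne_zero_iff.mpr fun c _ => sub_ne_zero.mpr (Ne.symm (hΛα c))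
  have hQ0 : Q ≠ 0 := prod_ne_zero_iff.mpr fun c _ => by have := hpos c; intro h; nlinarith
  have haα : α - Λ a ≠ 0 := sub_ne_zero.mpr (Ne.symm (hΛα a))
  have haα' : -α - Λ a ≠ 0 := by have := hpos a; intro h; nlinarith
  have haα2 : α + Λ a ≠ 0 := by have := hpos a; intro h; nlinarith
  have ha' : Λ a ^ 2 - α ^ 2 ≠ 0 := sub_ne_zero.mpr ha
  have hodd : Odd (2 * n - 1) := ⟨n - 1, by omega⟩
  have h2 : F.eval (v (Sum.inr true)) *
        (∏ j ∈ univ.erase (Sum.inr true), (v (Sum.inr true) - v j))⁻¹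
      = -(β * (α - y ^ 2) / (2 * (α - Λ a))) := by
    rw [herase_r true, prod_disjSum]
    have e1 : (univ : Finset Bool).erase true = {false} := by decide
    rw [e1, prod_singleton]
    simp only [hvdef, Sum.elim_inl, Sum.elim_inr, if_true, Bool.false_eq_true, if_false]
    rw [hFeval]
    have e2 : ∏ c ∈ univ.erase a, (Λ c * α - α ^ 2) = (-α) ^ (2 * n - 1) * R := by
      rw [hRdef]
      have : ∀ c ∈ univ.erase a, Λ c * α - α ^ 2 = -α * (α - Λ c) := fun c _ => by ring
      rw [prod_congr rfl this, prod_mul_distrib, prod_const, hcard_erase a]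
    have e3 : ∏ c : Fin (2 * n), (α - Λ c) = (α - Λ a) * R :=
      (Finset.mul_prod_erase univ _ (mem_univ a)).symm
    rw [e2, e3, Odd.neg_pow hodd, ← hβα]
    field_simp
    ring
  have h3 : F.eval (v (Sum.inr false)) *
        (∏ j ∈ univ.erase (Sum.inr false), (v (Sum.inr false) - v j))⁻¹
      = β * ((-α - y ^ 2) / (2 * (α + Λ a))) := by
    rw [herase_r false, prod_disjSum]
    have e1 : (univ : Finset Bool).erase false = {true} := by decide
    rw [e1, prod_singleton]
    simp only [hvdef, Sum.elim_inl, Sum.elim_inr, if_true, Bool.false_eq_true, if_false]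
    rw [hFeval]
    have e2 : ∏ c ∈ univ.erase a, (Λ c * -α - α ^ 2) = α ^ (2 * n - 1) * Q := by
      rw [hQdef]
      have : ∀ c ∈ univ.erase a, Λ c * -α - α ^ 2 = α * (-α - Λ c) := fun c _ => by ring
      rw [prod_congr rfl this, prod_mul_distrib, prod_const, hcard_erase a]
    have e3 : ∏ c : Fin (2 * n), (-α - Λ c) = (-α - Λ a) * Q :=
      (Finset.mul_prod_erase univ _ (mem_univ a)).symm
    rw [e2, e3, ← hβα]
    have hden : (-α - Λ a) * Q * (-α - α) ≠ 0 :=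
      mul_ne_zero (mul_ne_zero haα' hQ0) (by intro h; nlinarith)
    have hden' : (2 : ℝ) * (α + Λ a) ≠ 0 := mul_ne_zero two_ne_zero haα2
    rw [← div_eq_mul_inv, ← mul_div_assoc, div_eq_div_iff hden hden']
    ring
  -- finale
  have hβ0 : β ≠ 0 := pow_ne_zero _ hα0
  apply mul_left_cancel₀ hβ0
  calc β * ∑ b, W b / (Λ a * Λ b - α ^ 2)
      = ∑ b, β * (W b / (Λ a * Λ b - α ^ 2)) := Finset.mul_sum _ _ _
    _ = ∑ b : Fin (2 * n), F.eval (v (Sum.inl b)) *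
          (∏ j ∈ univ.erase (Sum.inl b), (v (Sum.inl b) - v j))⁻¹ :=
        (sum_congr rfl fun b _ => h1 b).symm
    _ = -(∑ x : Bool, F.eval (v (Sum.inr x)) *
          (∏ j ∈ univ.erase (Sum.inr x), (v (Sum.inr x) - v j))⁻¹) :=
        eq_neg_of_add_eq_zero_left hmaster
    _ = β * ((y ^ 2 * Λ a - α ^ 2) / (Λ a ^ 2 - α ^ 2)) := by
        rw [Fintype.sum_bool, h2, h3]
        field_simp
        ring
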